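/- arXiv:1608.01532 — 2 statements merged into one kernel-verified Lean document; each statement's English description precedes it below -/
import Mathlib

section
/- For a connected weighted graph with λ₂ the second-smallest eigenvalue of the normalized Laplacian, the following Loewner-order sandwich holds: 0 ≤ L* − (D^{−1} + D^{−1}AD^{−1} − 2m^{−1} ι_n ι_n') ≤ λ₂^{−1} D^{−1} A D^{−1} A D^{−1}. -/
open Matrix BigOperators

open Classical in
/-- Moore–Penrose pseudoinverse of a real matrix (defined via the four Penrose conditions,
which determine it uniquely; it always exists for real matrices). -/
noncomputable def mpinv {m n : ℕ} (M : Matrix (Fin m) (Fin n) ℝ) : Matrix (Fin n) (Fin m) ℝ :=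
  if h : ∃ N : Matrix (Fin n) (Fin m) ℝ,
      M * N * M = M ∧ N * M * N = N ∧ (M * N)ᵀ = M * N ∧ (N * M)ᵀ = N * M
  then h.choose else 0

lemma star_eq_trans {n : ℕ} (M : Matrix (Fin n) (Fin n) ℝ) : star M = Mᵀ := by
  rw [Matrix.star_eq_conjTranspose]; ext i j; simp [conjTranspose_apply]

lemma penrose_uniq {n : ℕ} {M N1 N2 : Matrix (Fin n) (Fin n) ℝ}
    (h1 : M*N1*M = M) (h2 : N1*M*N1 = N1) (h3 : (M*N1)ᵀ = M*N1) (h4 : (N1*M)ᵀ = N1*M)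
    (g1 : M*N2*M = M) (g2 : N2*M*N2 = N2) (g3 : (M*N2)ᵀ = M*N2) (g4 : (N2*M)ᵀ = N2*M) :
    N1 = N2 := by
  have hMN : M * N1 = M * N2 := by
    calc M * N1 = (M*N2*M)*N1 := by rw [g1]
    _ = (M*N2)*(M*N1) := mul_assoc _ _ _
    _ = (M*N2)ᵀ * (M*N1)ᵀ := by rw [g3, h3]
    _ = ((M*N1)*(M*N2))ᵀ := (transpose_mul _ _).symm
    _ = ((M*N1*M)*N2)ᵀ := by simp only [mul_assoc]
    _ = (M*N2)ᵀ := by rw [h1]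
    _ = M*N2 := g3
  have hNM : N1 * M = N2 * M := by
    calc N1 * M = N1*(M*N2*M) := by rw [g1]
    _ = (N1*M)*(N2*M) := by simp only [mul_assoc]
    _ = (N1*M)ᵀ * (N2*M)ᵀ := by rw [h4, g4]
    _ = ((N2*M)*(N1*M))ᵀ := (transpose_mul _ _).symm
    _ = ((N2*(M*N1))*M)ᵀ := by simp only [mul_assoc]
    _ = (N2*(M*N2)*M)ᵀ := by rw [hMN]
    _ = ((N2*M*N2)*M)ᵀ := by simp only [mul_assoc]
    _ = (N2*M)ᵀ := by rw [g2]
    _ = N2*M := g4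
  calc N1 = N1*M*N1 := h2.symm
  _ = N1*(M*N2) := by rw [mul_assoc, hMN]
  _ = (N1*M)*N2 := by rw [mul_assoc]
  _ = (N2*M)*N2 := by rw [hNM]
  _ = N2 := by rw [mul_assoc] at g2 ⊢; exact g2

lemma mpinv_eq {n : ℕ} {M N : Matrix (Fin n) (Fin n) ℝ}
    (h1 : M*N*M = M) (h2 : N*M*N = N) (h3 : (M*N)ᵀ = M*N) (h4 : (N*M)ᵀ = N*M) :
    mpinv M = N := by
  have hex : ∃ N' : Matrix (Fin n) (Fin n) ℝ,
      M * N' * M = M ∧ N' * M * N' = N' ∧ (M * N')ᵀ = M * N' ∧ (N' * M)ᵀ = N' * M :=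
    ⟨N, h1, h2, h3, h4⟩
  rw [mpinv, dif_pos hex]
  obtain ⟨g1, g2, g3, g4⟩ := hex.choose_spec
  exact penrose_uniq g1 g2 g3 g4 h1 h2 h3 h4

lemma conj_mul_conj {n : ℕ} {U : Matrix (Fin n) (Fin n) ℝ} (hU1 : star U * U = 1)
    (a b : Fin n → ℝ) :
    (U * diagonal a * star U) * (U * diagonal b * star U)
      = U * diagonal (fun k => a k * b k) * star U := by
  have : (U * diagonal a * star U) * (U * diagonal b * star U)
      = U * (diagonal a * ((star U * U) * (diagonal b * star U))) := by
    simp only [mul_assoc]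
  have h2 : diagonal a * (diagonal b * star U) = diagonal (fun k => a k * b k) * star U := by
    rw [← mul_assoc, diagonal_mul_diagonal]
  rw [this, hU1, one_mul, h2, ← mul_assoc]

lemma conj_transpose_self {n : ℕ} (U : Matrix (Fin n) (Fin n) ℝ) (a : Fin n → ℝ) :
    (U * diagonal a * star U)ᵀ = U * diagonal a * star U := by
  rw [transpose_mul, transpose_mul, star_eq_trans, transpose_transpose, diagonal_transpose,
    ← star_eq_trans, mul_assoc]

lemma mpinv_conj {n : ℕ} {U : Matrix (Fin n) (Fin n) ℝ} (hU1 : star U * U = 1)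
    (μ : Fin n → ℝ) :
    mpinv (U * diagonal μ * star U) = U * diagonal (fun k => (μ k)⁻¹) * star U := by
  have key : ∀ f g : Fin n → ℝ, (∀ k, f k = g k) →
      U * diagonal f * star U = U * diagonal g * star U := by
    intro f g h; rw [funext h]
  have s1 : (U*diagonal μ*star U) * (U*diagonal (fun k => (μ k)⁻¹) * star U)
      = U * diagonal (fun k => μ k * (μ k)⁻¹) * star U := conj_mul_conj hU1 _ _
  have s1' : (U*diagonal (fun k => (μ k)⁻¹) * star U) * (U*diagonal μ*star U)
      = U * diagonal (fun k => (μ k)⁻¹ * μ k) * star U := conj_mul_conj hU1 _ _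
  have s2 : (U * diagonal (fun k => μ k * (μ k)⁻¹) * star U) * (U*diagonal μ*star U)
      = U * diagonal (fun k => μ k * (μ k)⁻¹ * μ k) * star U := conj_mul_conj hU1 _ _
  have s2' : (U * diagonal (fun k => (μ k)⁻¹ * μ k) * star U)
        * (U*diagonal (fun k => (μ k)⁻¹)*star U)
      = U * diagonal (fun k => (μ k)⁻¹ * μ k * (μ k)⁻¹) * star U := conj_mul_conj hU1 _ _
  refine mpinv_eq ?_ ?_ ?_ ?_
  · rw [s1, s2]
    exact key _ _ fun k => by
      rcases eq_or_ne (μ k) 0 with h | h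
      · simp [h]
      · field_simp
  · rw [s1', s2']
    exact key _ _ fun k => by
      rcases eq_or_ne (μ k) 0 with h | h
      · simp [h]
      · field_simp
  · rw [s1, conj_transpose_self]
  · rw [s1', conj_transpose_self]

lemma comb4 {n : ℕ} (P Q X1 X2 X3 X4 : Matrix (Fin n) (Fin n) ℝ) (r : ℝ) :
    P*X1*Q - (P*X2*Q + P*X3*Q - r • (P*X4*Q)) = P*(X1 - (X2 + X3 - r • X4))*Q := by
  simp only [Matrix.mul_sub, Matrix.sub_mul, Matrix.mul_add, Matrix.add_mul,
    Matrix.mul_smul, Matrix.smul_mul]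

lemma comb2 {n : ℕ} (P Q X1 X2 : Matrix (Fin n) (Fin n) ℝ) (r : ℝ) :
    r • (P*X1*Q) - P*X2*Q = P*(r • X1 - X2)*Q := by
  simp only [Matrix.mul_sub, Matrix.sub_mul, Matrix.mul_smul, Matrix.smul_mul]

lemma diag_comb4 {n : ℕ} (a b c e : Fin n → ℝ) (r : ℝ) :
    diagonal a - (diagonal b + diagonal c - r • diagonal e)
      = diagonal (fun k => a k - (b k + c k - r * e k)) := by
  ext i j
  by_cases h : i = j <;>
    simp [Matrix.diagonal_apply, h, Matrix.sub_apply, Matrix.add_apply, Matrix.smul_apply]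

lemma diag_comb2 {n : ℕ} (a b : Fin n → ℝ) (r : ℝ) :
    r • diagonal a - diagonal b = diagonal (fun k => r * a k - b k) := by
  ext i j
  by_cases h : i = j <;>
    simp [Matrix.diagonal_apply, h, Matrix.sub_apply, Matrix.smul_apply]

lemma psd_conj {n : ℕ} (P : Matrix (Fin n) (Fin n) ℝ) {g : Fin n → ℝ} (hg : ∀ k, 0 ≤ g k) :
    (P * diagonal g * star P).PosSemidef := by
  have h1 : (diagonal g).PosSemidef := posSemidef_diagonal_iff.mpr hg
  have := h1.mul_mul_conjTranspose_same P
  rwa [Matrix.star_eq_conjTranspose]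

lemma conj_sub {n : ℕ} (U : Matrix (Fin n) (Fin n) ℝ) (a b : Fin n → ℝ) :
    U * diagonal a * star U - U * diagonal b * star U
      = U * diagonal (fun k => a k - b k) * star U := by
  have : diagonal a - diagonal b = diagonal (fun k => a k - b k) := by
    ext i j
    by_cases h : i = j <;> simp [Matrix.diagonal_apply, h, Matrix.sub_apply]
  rw [← this, Matrix.mul_sub, Matrix.sub_mul]

/-- The diagonal matrix `D^{-1/2}` for `D = diag d`. -/
noncomputable def dhalfInv {n : ℕ} (d : Fin n → ℝ) : Matrix (Fin n) (Fin n) ℝ :=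
  Matrix.diagonal fun i => 1 / Real.sqrt (d i)

/-- The generalized inverse `M* = D^{-1/2} (D^{-1/2} M D^{-1/2})† D^{-1/2}`. -/
noncomputable def gstar {n : ℕ} (d : Fin n → ℝ) (M : Matrix (Fin n) (Fin n) ℝ) :
    Matrix (Fin n) (Fin n) ℝ :=
  dhalfInv d * mpinv (dhalfInv d * M * dhalfInv d) * dhalfInv d

/-- Connectivity of the weighted graph with adjacency matrix `A`. -/
def Conn {n : ℕ} (A : Matrix (Fin n) (Fin n) ℝ) : Prop :=
  ∀ i j : Fin n, Relation.ReflTransGen (fun a b => A a b ≠ 0) i j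

/-- Loewner sandwich
`0 ≤ L* - (D⁻¹ + D⁻¹AD⁻¹ - 2m⁻¹ ιι') ≤ λ₂⁻¹ D⁻¹AD⁻¹AD⁻¹`. -/
theorem stmt11 {n : ℕ} (A : Matrix (Fin n) (Fin n) ℝ) (hsym : Aᵀ = A)
    (hnn : ∀ i j, 0 ≤ A i j) (hdiag : ∀ i, A i i = 0)
    (d : Fin n → ℝ) (hdeg : ∀ i, d i = ∑ j, A i j) (hdpos : ∀ i, 0 < d i)
    (hconn : Conn A)
    (S : Matrix (Fin n) (Fin n) ℝ)
    (hS : S = 1 - dhalfInv d * A * dhalfInv d)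
    (lam2 : ℝ) (hlampos : 0 < lam2)
    (hlam : IsLeast {r : ℝ | ∃ x : Fin n → ℝ, x ≠ 0 ∧
        (fun i => Real.sqrt (d i)) ⬝ᵥ x = 0 ∧ r = (x ⬝ᵥ (S *ᵥ x)) / (x ⬝ᵥ x)} lam2)
    (Dinv : Matrix (Fin n) (Fin n) ℝ) (hDinv : Dinv = Matrix.diagonal fun i => (d i)⁻¹) :
    (gstar d (Matrix.diagonal d - A)
      - (Dinv + Dinv * A * Dinv
          - (2 * (∑ i, d i)⁻¹) • vecMulVec (fun _ => (1 : ℝ)) (fun _ => (1 : ℝ)))).PosSemidef ∧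
    (lam2⁻¹ • (Dinv * A * Dinv * A * Dinv)
      - (gstar d (Matrix.diagonal d - A)
          - (Dinv + Dinv * A * Dinv
              - (2 * (∑ i, d i)⁻¹) • vecMulVec (fun _ => (1 : ℝ))
                  (fun _ => (1 : ℝ))))).PosSemidef := by
  classical
  set H : Matrix (Fin n) (Fin n) ℝ := dhalfInv d with hHdef
  set v : Fin n → ℝ := fun i => Real.sqrt (d i) with hvdef
  have hvpos : ∀ i, 0 < v i := fun i => Real.sqrt_pos.mpr (hdpos i)
  have hvsq : ∀ i, v i * v i = d i := fun i => Real.mul_self_sqrt (hdpos i).le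
  have hHt : Hᵀ = H := diagonal_transpose _
  have hSt : Sᵀ = S := by
    rw [hS]
    simp only [transpose_sub, transpose_one, transpose_mul, hHt, hsym, hHdef]
    simp only [mul_assoc]
    rw [dhalfInv, diagonal_transpose]
  have hHerm : S.IsHermitian := by
    unfold Matrix.IsHermitian
    rw [← Matrix.star_eq_conjTranspose, star_eq_trans]
    exact hSt
  set U : Matrix (Fin n) (Fin n) ℝ := (hHerm.eigenvectorUnitary : Matrix (Fin n) (Fin n) ℝ)
    with hUdef
  set μ : Fin n → ℝ := hHerm.eigenvalues with hμdef
  have hU1 : star U * U = 1 := Unitary.coe_star_mul_self _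
  have hU2 : U * star U = 1 := Unitary.coe_mul_star_self _
  have hspec : S = U * diagonal μ * star U := by
    simpa using hHerm.spectral_theorem
  -- basic diagonal computations
  have hHH : H * H = diagonal (fun i => (d i)⁻¹) := by
    rw [hHdef]
    unfold dhalfInv
    rw [diagonal_mul_diagonal]
    have key : ∀ i, 1 / Real.sqrt (d i) * (1 / Real.sqrt (d i)) = (d i)⁻¹ := by
      intro i
      rw [div_mul_div_comm, one_mul, Real.mul_self_sqrt (hdpos i).le, one_div]
    rw [funext key]
  have hDinvHH : Dinv = H * H := by rw [hDinv, hHH]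
  have hHv1 : H *ᵥ v = fun _ => (1 : ℝ) := by
    funext i
    rw [hHdef]
    unfold dhalfInv
    rw [mulVec_diagonal]
    rw [hvdef]
    rw [div_mul_eq_mul_div, one_mul]
    exact div_self (ne_of_gt (Real.sqrt_pos.mpr (hdpos i)))
  have hA1d : A *ᵥ (fun _ => (1 : ℝ)) = d := by
    funext i
    simp only [mulVec, dotProduct, mul_one]
    exact (hdeg i).symm
  have hHd : H *ᵥ d = v := by
    funext i
    rw [hHdef]
    unfold dhalfInv
    rw [mulVec_diagonal, hvdef, one_div, inv_mul_eq_div, Real.div_sqrt]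
  have hSv : S *ᵥ v = 0 := by
    rw [hS, sub_mulVec, one_mulVec, ← mulVec_mulVec, ← mulVec_mulVec, hHv1, hA1d, hHd,
      sub_self]
  set c : Fin n → ℝ := v ᵥ* U with hcdef
  have hc2 : c = star U *ᵥ v := by
    funext k
    rw [star_eq_trans]
    simp [hcdef, vecMul, mulVec, dotProduct, transpose_apply, mul_comm]
  have hUc : U *ᵥ c = v := by
    rw [hc2, mulVec_mulVec, hU2, one_mulVec]
  have hcμ : ∀ k, c k * μ k = 0 := by
    have h0 : v ᵥ* S = 0 := by
      funext j
      have : (v ᵥ* S) j = ∑ i, v i * S i j := by simp [vecMul, dotProduct]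
      rw [this]
      have h2 : ∀ i, v i * S i j = S j i * v i := by
        intro i
        have : S i j = S j i := congrFun (congrFun hSt j) i
        rw [this, mul_comm]
      rw [Finset.sum_congr rfl fun i _ => h2 i]
      have : ∑ i, S j i * v i = (S *ᵥ v) j := by simp [mulVec, dotProduct]
      rw [this, hSv]
    have hin : c ᵥ* diagonal μ = fun k => c k * μ k := by
      funext k
      rw [vecMul_diagonal]
    have h1 : v ᵥ* S = (fun k => c k * μ k) ᵥ* (star U) := by
      rw [hspec, ← vecMul_vecMul, ← vecMul_vecMul, ← hcdef, hin]
    have h2 : (fun k => c k * μ k) ᵥ* (star U) = 0 := by rw [← h1, h0]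
    have h3 : (fun k => c k * μ k) = 0 := by
      have h4 := congrArg (fun w => w ᵥ* U) h2
      simp only [vecMul_vecMul, hU1, vecMul_one, zero_vecMul] at h4
      exact h4
    intro k
    exact congrFun h3 k
  have hxx_pos : ∀ x : Fin n → ℝ, x ≠ 0 → 0 < x ⬝ᵥ x := by
    intro x hx
    have h1 : 0 ≤ x ⬝ᵥ x := by
      simp only [dotProduct]
      exact Finset.sum_nonneg fun i _ => mul_self_nonneg _
    rcases h1.lt_or_eq with h | h
    · exact h
    · exact absurd (dotProduct_self_eq_zero.mp h.symm) hx
  have hray : ∀ x : Fin n → ℝ, x ≠ 0 → v ⬝ᵥ x = 0 → lam2 * (x ⬝ᵥ x) ≤ x ⬝ᵥ (S *ᵥ x) := by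
    intro x hx hvx
    have hmem : (x ⬝ᵥ (S *ᵥ x)) / (x ⬝ᵥ x) ∈ {r : ℝ | ∃ x : Fin n → ℝ, x ≠ 0 ∧
        (fun i => Real.sqrt (d i)) ⬝ᵥ x = 0 ∧ r = (x ⬝ᵥ (S *ᵥ x)) / (x ⬝ᵥ x)} :=
      ⟨x, hx, hvx, rfl⟩
    have h1 := hlam.2 hmem
    rw [le_div_iff₀ (hxx_pos x hx)] at h1
    linarith
  -- eigen-columns
  have hcol_ne : ∀ y : Fin n → ℝ, y ≠ 0 → U *ᵥ y ≠ 0 := by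
    intro y hy h
    apply hy
    have h2 : star U *ᵥ (U *ᵥ y) = 0 := by rw [h, mulVec_zero]
    rwa [mulVec_mulVec, hU1, one_mulVec] at h2
  have hScol : ∀ y : Fin n → ℝ, S *ᵥ (U *ᵥ y) = U *ᵥ (diagonal μ *ᵥ y) := by
    intro y
    rw [hspec, mulVec_mulVec]
    have h1 : U * diagonal μ * star U * U = U * diagonal μ := by
      rw [mul_assoc (U * diagonal μ), hU1, mul_one]
    rw [h1, ← mulVec_mulVec]
  have hvcol : ∀ y : Fin n → ℝ, v ⬝ᵥ (U *ᵥ y) = c ⬝ᵥ y := by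
    intro y
    rw [dotProduct_mulVec, ← hcdef]
  have hC : ∀ k l, k ≠ l → c k * c l = 0 := by
    intro k l hkl
    by_contra hne
    have hck : c k ≠ 0 := fun h => hne (by rw [h, zero_mul])
    have hcl : c l ≠ 0 := fun h => hne (by rw [h, mul_zero])
    have hμk : μ k = 0 := by
      rcases mul_eq_zero.mp (hcμ k) with h | h
      · exact absurd h hck
      · exact h
    have hμl : μ l = 0 := by
      rcases mul_eq_zero.mp (hcμ l) with h | h
      · exact absurd h hcl
      · exact h
    set y : Fin n → ℝ := fun i => if i = k then c l else if i = l then - c k else 0 with hy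
    have hyne : y ≠ 0 := by
      intro h
      have h2 := congrFun h k
      simp [hy] at h2
      exact hcl h2
    have hxne : U *ᵥ y ≠ 0 := hcol_ne y hyne
    have hvx : v ⬝ᵥ (U *ᵥ y) = 0 := by
      rw [hvcol]
      have h3 : ∀ i, c i * y i
          = (if i = k then c k * c l else 0) + (if i = l then -(c k * c l) else 0) := by
        intro i
        by_cases h1 : i = k
        · subst h1; simp [hy, hkl]
        · by_cases h2 : i = l
          · subst h2; simp [hy, h1]; ring
          · simp [hy, h1, h2]
      have h4 : c ⬝ᵥ y = ∑ i, c i * y i := rfl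
      rw [h4, Finset.sum_congr rfl fun i _ => h3 i, Finset.sum_add_distrib,
        Finset.sum_ite_eq' Finset.univ k, Finset.sum_ite_eq' Finset.univ l]
      simp
    have hdy : diagonal μ *ᵥ y = 0 := by
      funext i
      rw [mulVec_diagonal]
      by_cases hik : i = k
      · subst hik; simp [hμk]
      · by_cases hil : i = l
        · subst hil; simp [hμl]
        · simp [hy, hik, hil]
    have hSx : S *ᵥ (U *ᵥ y) = 0 := by rw [hScol, hdy, mulVec_zero]
    have h1 := hray (U *ᵥ y) hxne hvx
    rw [hSx, dotProduct_zero] at h1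
    nlinarith [hxx_pos (U *ᵥ y) hxne]
  have hD : ∀ k, c k = 0 → lam2 ≤ μ k := by
    intro k hck
    set y : Fin n → ℝ := fun i => if i = k then 1 else 0 with hy
    have hyne : y ≠ 0 := by
      intro h
      have h2 := congrFun h k
      simp [hy] at h2
    have hxne := hcol_ne y hyne
    have hvx : v ⬝ᵥ (U *ᵥ y) = 0 := by
      rw [hvcol]
      have h4 : c ⬝ᵥ y = ∑ i, c i * y i := rfl
      have h3 : ∀ i, c i * y i = if i = k then c i else 0 := by
        intro i
        by_cases h1 : i = k <;> simp [hy, h1]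
      rw [h4, Finset.sum_congr rfl fun i _ => h3 i, Finset.sum_ite_eq' Finset.univ k]
      simp [hck]
    have hdy : diagonal μ *ᵥ y = μ k • y := by
      funext i
      rw [mulVec_diagonal]
      by_cases hik : i = k
      · subst hik; simp [hy]
      · simp [hy, hik]
    have hSx : S *ᵥ (U *ᵥ y) = μ k • (U *ᵥ y) := by
      rw [hScol, hdy, mulVec_smul]
    have h1 := hray _ hxne hvx
    rw [hSx, dotProduct_smul, smul_eq_mul] at h1
    have h2 := hxx_pos _ hxne
    nlinarith
  have hsumc : ∑ k, c k * c k = ∑ i, d i := by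
    have h1 : c ⬝ᵥ c = v ⬝ᵥ (U *ᵥ c) := by rw [hvcol]
    rw [hUc] at h1
    have h2 : v ⬝ᵥ v = ∑ i, d i := by
      simp only [dotProduct]
      exact Finset.sum_congr rfl fun i _ => hvsq i
    have h3 : c ⬝ᵥ c = ∑ k, c k * c k := rfl
    rw [← h3, h1, h2]
  -- conjugated-diagonal forms
  have honec : (1 : Matrix (Fin n) (Fin n) ℝ) = U * diagonal (fun _ => (1:ℝ)) * star U := by
    rw [diagonal_one, mul_one, hU2]
  have hBd : H * A * H = U * diagonal (fun k => 1 - μ k) * star U := by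
    have h1 : H * A * H = 1 - S := by rw [hS, sub_sub_cancel]
    rw [h1, hspec]
    conv_lhs => rw [honec]
    rw [conj_sub]
  have hmpS : mpinv S = U * diagonal (fun k => (μ k)⁻¹) * star U := by
    rw [hspec]; exact mpinv_conj hU1 μ
  have hBBd : (H*A*H)*(H*A*H) = U * diagonal (fun k => (1 - μ k) * (1 - μ k)) * star U := by
    rw [hBd]; exact conj_mul_conj hU1 _ _
  have hvvd : vecMulVec v v = U * diagonal (fun k => c k * c k) * star U := by
    ext i j
    have hR : (U * diagonal (fun k => c k * c k) * star U) i j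
        = ∑ k, U i k * (c k * c k) * U j k := by
      rw [Matrix.mul_apply]
      refine Finset.sum_congr rfl fun k _ => ?_
      rw [Matrix.mul_diagonal]
      have h5 : (star U) k j = U j k := by rw [star_eq_trans]; rfl
      rw [h5]
    have hvi : v i = ∑ k, U i k * c k := by rw [← hUc]; rfl
    have hvj : v j = ∑ k, U j k * c k := by rw [← hUc]; rfl
    rw [vecMulVec_apply, hR, hvi, hvj, Finset.sum_mul_sum]
    refine Finset.sum_congr rfl fun k _ => ?_
    rw [Finset.sum_eq_single k]
    · ring
    · intro l _ hlk
      have h0 := hC k l (Ne.symm hlk)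
      calc U i k * c k * (U j l * c l) = (U i k * U j l) * (c k * c l) := by ring
      _ = 0 := by rw [h0, mul_zero]
    · intro h; exact absurd (Finset.mem_univ k) h
  set m0 : ℝ := ∑ i, d i with hm0
  -- gstar reduction
  have hHdiag : H = diagonal (fun i => 1 / Real.sqrt (d i)) := rfl
  have hHLH : H * (Matrix.diagonal d - A) * H = S := by
    have h1 : H * Matrix.diagonal d * H = 1 := by
      rw [hHdiag, diagonal_mul_diagonal, diagonal_mul_diagonal]
      ext i j
      by_cases hij : i = j
      · subst hij
        rw [Matrix.diagonal_apply_eq, Matrix.one_apply_eq]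
        have hs := Real.mul_self_sqrt (hdpos i).le
        have hsne : Real.sqrt (d i) ≠ 0 := ne_of_gt (Real.sqrt_pos.mpr (hdpos i))
        field_simp
        rw [Real.sq_sqrt (hdpos i).le]
      · rw [Matrix.diagonal_apply_ne _ hij, Matrix.one_apply_ne hij]
    rw [Matrix.mul_sub, Matrix.sub_mul, hS, h1]
  have hGS : gstar d (Matrix.diagonal d - A) = H * mpinv S * H := by
    unfold gstar
    rw [← hHdef, hHLH]
  have hDinv1 : Dinv = H * 1 * H := by rw [hDinvHH, mul_one]
  have hDAD : Dinv * A * Dinv = H * (H*A*H) * H := by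
    rw [hDinvHH]; simp only [mul_assoc]
  have hDAD5 : Dinv * A * Dinv * A * Dinv = H * ((H*A*H)*(H*A*H)) * H := by
    rw [hDinvHH]; simp only [mul_assoc]
  have hJ : vecMulVec (fun _ => (1:ℝ)) (fun _ => (1:ℝ)) = H * vecMulVec v v * H := by
    ext i j
    rw [vecMulVec_apply, hHdiag, Matrix.mul_diagonal, Matrix.diagonal_mul, vecMulVec_apply]
    have hsi : Real.sqrt (d i) ≠ 0 := ne_of_gt (Real.sqrt_pos.mpr (hdpos i))
    have hsj : Real.sqrt (d j) ≠ 0 := ne_of_gt (Real.sqrt_pos.mpr (hdpos j))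
    have hvi : v i = Real.sqrt (d i) := rfl
    have hvj : v j = Real.sqrt (d j) := rfl
    rw [hvi, hvj]
    field_simp
  have key1 : gstar d (Matrix.diagonal d - A)
      - (Dinv + Dinv * A * Dinv
          - (2 * m0⁻¹) • vecMulVec (fun _ => (1 : ℝ)) (fun _ => (1 : ℝ)))
      = H * (mpinv S - ((1 : Matrix (Fin n) (Fin n) ℝ) + H*A*H
          - (2 * m0⁻¹) • vecMulVec v v)) * H := by
    rw [hGS]
    conv_lhs => rw [hDAD, hDinv1, hJ]
    exact comb4 H H _ _ _ _ _
  have hInner1 : mpinv S - ((1 : Matrix (Fin n) (Fin n) ℝ) + H*A*H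
        - (2 * m0⁻¹) • vecMulVec v v)
      = U * diagonal (fun k => (μ k)⁻¹
          - (1 + (1 - μ k) - 2 * m0⁻¹ * (c k * c k))) * star U := by
    rw [hmpS, hBd, hvvd]
    conv_lhs => rw [honec]
    rw [comb4 U (star U) _ _ _ _ _, diag_comb4]
  have hconj : ∀ g : Fin n → ℝ,
      H * (U * diagonal g * star U) * H = (H*U) * diagonal g * star (H*U) := by
    intro g
    have h9 : star (H*U) = star U * H := by
      rw [star_eq_trans (H*U), transpose_mul, hHt, ← star_eq_trans U]
    rw [h9]
    simp only [mul_assoc]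
  -- nonnegativity of the diagonal entries
  have hδ1 : ∀ k, 0 ≤ (μ k)⁻¹ - (1 + (1 - μ k) - 2 * m0⁻¹ * (c k * c k)) := by
    intro k
    by_cases hck : c k = 0
    · have hμ := hD k hck
      have hμpos : 0 < μ k := lt_of_lt_of_le hlampos hμ
      have hinv : μ k * (μ k)⁻¹ = 1 := mul_inv_cancel₀ (ne_of_gt hμpos)
      rw [hck]
      nlinarith [sq_nonneg (μ k - 1), hμpos, hinv]
    · have hμk : μ k = 0 := by
        rcases mul_eq_zero.mp (hcμ k) with h | h
        · exact absurd h hck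
        · exact h
      have hckk : c k * c k = m0 := by
        rw [← hsumc]
        symm
        apply Finset.sum_eq_single k
        · intro l _ hlk
          have h0 := hC k l (Ne.symm hlk)
          have hl0 : c l = 0 := by
            rcases mul_eq_zero.mp h0 with h | h
            · exact absurd h hck
            · exact h
          rw [hl0, mul_zero]
        · intro h; exact absurd (Finset.mem_univ k) h
      have hm0pos : 0 < m0 := Finset.sum_pos (fun i _ => hdpos i) ⟨k, Finset.mem_univ _⟩
      have hinv : m0⁻¹ * m0 = 1 := inv_mul_cancel₀ (ne_of_gt hm0pos)
      have h6 : 2 * m0⁻¹ * m0 = 2 := by rw [mul_assoc, hinv, mul_one]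
      rw [hμk, hckk, _root_.inv_zero]
      linarith [h6]
  have hδ2 : ∀ k, 0 ≤ lam2⁻¹ * ((1 - μ k) * (1 - μ k))
      - ((μ k)⁻¹ - (1 + (1 - μ k) - 2 * m0⁻¹ * (c k * c k))) := by
    intro k
    by_cases hck : c k = 0
    · have hμ := hD k hck
      have hμpos : 0 < μ k := lt_of_lt_of_le hlampos hμ
      have hμne : μ k ≠ 0 := ne_of_gt hμpos
      have hid : (μ k)⁻¹ - (1 + (1 - μ k)) = (1 - μ k) * (1 - μ k) * (μ k)⁻¹ := by
        field_simp
        ring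
      have hle : (μ k)⁻¹ ≤ lam2⁻¹ := by
        apply inv_anti₀ hlampos hμ
      have h2 := mul_le_mul_of_nonneg_left hle (mul_self_nonneg (1 - μ k))
      rw [hck]
      have h7 : 2 * m0⁻¹ * ((0:ℝ) * 0) = 0 := by ring
      linarith [h2, hid, h7]
    · have hμk : μ k = 0 := by
        rcases mul_eq_zero.mp (hcμ k) with h | h
        · exact absurd h hck
        · exact h
      have hckk : c k * c k = m0 := by
        rw [← hsumc]
        symm
        apply Finset.sum_eq_single k
        · intro l _ hlk
          have h0 := hC k l (Ne.symm hlk)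
          have hl0 : c l = 0 := by
            rcases mul_eq_zero.mp h0 with h | h
            · exact absurd h hck
            · exact h
          rw [hl0, mul_zero]
        · intro h; exact absurd (Finset.mem_univ k) h
      have hm0pos : 0 < m0 := Finset.sum_pos (fun i _ => hdpos i) ⟨k, Finset.mem_univ _⟩
      have hinv : m0⁻¹ * m0 = 1 := inv_mul_cancel₀ (ne_of_gt hm0pos)
      have hl2 : (0:ℝ) ≤ lam2⁻¹ := le_of_lt (inv_pos.mpr hlampos)
      have h6 : 2 * m0⁻¹ * m0 = 2 := by rw [mul_assoc, hinv, mul_one]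
      rw [hμk, hckk, _root_.inv_zero]
      linarith [h6, hl2]
  -- final assembly
  have e1 : gstar d (Matrix.diagonal d - A)
      - (Dinv + Dinv * A * Dinv
          - (2 * m0⁻¹) • vecMulVec (fun _ => (1 : ℝ)) (fun _ => (1 : ℝ)))
      = (H*U) * diagonal (fun k => (μ k)⁻¹
          - (1 + (1 - μ k) - 2 * m0⁻¹ * (c k * c k))) * star (H*U) := by
    rw [key1, hInner1, hconj]
  have e2 : lam2⁻¹ • (Dinv * A * Dinv * A * Dinv)
      - (gstar d (Matrix.diagonal d - A)
          - (Dinv + Dinv * A * Dinv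
              - (2 * m0⁻¹) • vecMulVec (fun _ => (1 : ℝ)) (fun _ => (1 : ℝ))))
      = (H*U) * diagonal (fun k => lam2⁻¹ * ((1 - μ k) * (1 - μ k))
          - ((μ k)⁻¹ - (1 + (1 - μ k) - 2 * m0⁻¹ * (c k * c k)))) * star (H*U) := by
    rw [key1, hInner1, hDAD5, comb2 H H _ _ _, hBBd, comb2 U (star U) _ _ _, diag_comb2,
      hconj]
  constructor
  · rw [e1]
    exact psd_conj _ hδ1
  · rw [e2]
    exact psd_conj _ hδ2
end

section
/- Variance bound for differences: for a connected weighted graph and homoskedastic errors, with d_{ij} := Σ_k A_{ik}A_{jk} and h_{ij} := (d_{ij}^{−1} Σ_k A_{ik}A_{jk}/d_k)^{−1} (taken as ∞ if d_{ij}=0), one has σ²(1/d_i + 1/d_j − 2A_{ij}/(d_i d_j)) ≤ var(α̂_i − α̂_j) ≤ σ²(1/d_i + 1/d_j − 2A_{ij}/(d_i d_j)) + (σ²/λ₂)(1/(d_i h_i) + 1/(d_j h_j) − 2 d_{ij}/(d_i d_j h_{ij})). -/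
open Matrix BigOperators

lemma penrose_unique {n : ℕ} {S B C : Matrix (Fin n) (Fin n) ℝ}
    (hB1 : S * B * S = S) (hB2 : B * S * B = B) (hB3 : (S * B)ᵀ = S * B) (hB4 : (B * S)ᵀ = B * S)
    (hC1 : S * C * S = S) (hC2 : C * S * C = C)
    (hC3 : (S * C)ᵀ = S * C) (hC4 : (C * S)ᵀ = C * S) :
    B = C := by
  have t1 : S * C = (S * B) * (S * C) := by
    conv_lhs => rw [← hB1]
    rw [Matrix.mul_assoc]
  have t2 : S * B = (S * C) * (S * B) := by
    conv_lhs => rw [← hC1]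
    rw [Matrix.mul_assoc]
  have t3 : S * C = (S * C) * (S * B) := by
    calc S * C = (S * C)ᵀ := hC3.symm
      _ = ((S * B) * (S * C))ᵀ := by rw [← t1]
      _ = (S * C)ᵀ * (S * B)ᵀ := Matrix.transpose_mul _ _
      _ = (S * C) * (S * B) := by rw [hC3, hB3]
  have hSBC : S * B = S * C := t2.trans t3.symm
  have u1 : B * S = (B * S) * (C * S) := by
    conv_lhs => rw [← hC1]
    simp only [Matrix.mul_assoc]
  have u2 : C * S = (C * S) * (B * S) := by
    conv_lhs => rw [← hB1]
    simp only [Matrix.mul_assoc]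
  have u3 : C * S = (B * S) * (C * S) := by
    calc C * S = (C * S)ᵀ := hC4.symm
      _ = ((C * S) * (B * S))ᵀ := by rw [← u2]
      _ = (B * S)ᵀ * (C * S)ᵀ := by rw [Matrix.transpose_mul, hB4, hC4]
      _ = (B * S) * (C * S) := by rw [hB4, hC4]
  have hBSC : B * S = C * S := u1.trans u3.symm
  calc B = B * S * B := hB2.symm
    _ = (C * S) * B := by rw [hBSC]
    _ = C * (S * B) := Matrix.mul_assoc _ _ _
    _ = C * (S * C) := by rw [hSBC]
    _ = C * S * C := (Matrix.mul_assoc _ _ _).symm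
    _ = C := hC2

lemma exists_penrose {n : ℕ} {S : Matrix (Fin n) (Fin n) ℝ} (hs : Sᵀ = S) :
    ∃ N : Matrix (Fin n) (Fin n) ℝ,
      S * N * S = S ∧ N * S * N = N ∧ (S * N)ᵀ = S * N ∧ (N * S)ᵀ = N * S := by
  have hH : S.IsHermitian := by
    rwa [Matrix.IsHermitian, Matrix.conjTranspose_eq_transpose_of_trivial]
  obtain ⟨U, e, hUU, hspec⟩ : ∃ (U : Matrix (Fin n) (Fin n) ℝ) (e : Fin n → ℝ),
      star U * U = 1 ∧ S = U * Matrix.diagonal e * star U := by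
    refine ⟨hH.eigenvectorUnitary, hH.eigenvalues,
      (Matrix.mem_unitaryGroup_iff').mp hH.eigenvectorUnitary.2, ?_⟩
    have := hH.spectral_theorem
    simpa using this
  have key : ∀ f g : Fin n → ℝ, (U * Matrix.diagonal f * star U) * (U * Matrix.diagonal g * star U)
      = U * Matrix.diagonal (fun k => f k * g k) * star U := by
    intro f g
    calc (U * Matrix.diagonal f * star U) * (U * Matrix.diagonal g * star U)
        = U * (Matrix.diagonal f * ((star U * U) * (Matrix.diagonal g * star U))) := by
          simp only [Matrix.mul_assoc]
      _ = U * (Matrix.diagonal f * (Matrix.diagonal g * star U)) := by rw [hUU, one_mul]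
      _ = U * ((Matrix.diagonal f * Matrix.diagonal g) * star U) := by
          rw [← Matrix.mul_assoc (Matrix.diagonal f) (Matrix.diagonal g) (star U)]
      _ = U * Matrix.diagonal (fun k => f k * g k) * star U := by
          rw [Matrix.diagonal_mul_diagonal, ← Matrix.mul_assoc]
  have hsym : ∀ f : Fin n → ℝ, (U * Matrix.diagonal f * star U)ᵀ = U * Matrix.diagonal f * star U := by
    intro f
    have hstar : ∀ M : Matrix (Fin n) (Fin n) ℝ, star M = Mᵀ := fun M =>
      Matrix.conjTranspose_eq_transpose_of_trivial M
    rw [hstar, Matrix.transpose_mul, Matrix.transpose_mul, Matrix.transpose_transpose,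
      Matrix.diagonal_transpose, Matrix.mul_assoc]
  have hx : ∀ k, e k * (e k)⁻¹ * e k = e k := by
    intro k
    rcases eq_or_ne (e k) 0 with h0 | h0
    · simp [h0]
    · field_simp
  have hx' : ∀ k, (e k)⁻¹ * e k * (e k)⁻¹ = (e k)⁻¹ := by
    intro k
    rcases eq_or_ne (e k) 0 with h0 | h0
    · simp [h0]
    · field_simp
  refine ⟨U * Matrix.diagonal (fun k => (e k)⁻¹) * star U, ?_, ?_, ?_, ?_⟩
  · rw [hspec, key, key, funext hx]
  · rw [hspec, key, key, funext hx']
  · rw [hspec, key, hsym]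
  · rw [hspec, key, hsym]


lemma mpinv_spec {n : ℕ} {S : Matrix (Fin n) (Fin n) ℝ} (hs : Sᵀ = S) :
    S * mpinv S * S = S ∧ mpinv S * S * mpinv S = mpinv S ∧
      (S * mpinv S)ᵀ = S * mpinv S ∧ (mpinv S * S)ᵀ = mpinv S * S := by
  have h := exists_penrose hs
  rw [mpinv, dif_pos h]
  exact h.choose_spec

lemma symm_dot {n : ℕ} {T : Matrix (Fin n) (Fin n) ℝ} (hT : Tᵀ = T) (a b : Fin n → ℝ) :
    (T *ᵥ a) ⬝ᵥ b = a ⬝ᵥ (T *ᵥ b) := by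
  rw [Matrix.dotProduct_mulVec]
  congr 1
  conv_lhs => rw [← hT]
  rw [Matrix.mulVec_transpose]

lemma aux_bound {lam2 R Z V : ℝ} (hlam : 0 < lam2) (h1 : lam2 * V ≤ R)
    (h2 : R ^ 2 ≤ Z * V) (h3 : 0 ≤ R) (h4 : 0 ≤ Z) : lam2 * R ≤ Z := by
  nlinarith [mul_le_mul_of_nonneg_left h2 hlam.le, mul_le_mul_of_nonneg_left h1 h4]

set_option maxHeartbeats 1600000 in
theorem stmt13x {n : ℕ} (A : Matrix (Fin n) (Fin n) ℝ) (hsym : Aᵀ = A)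
    (hnn : ∀ i j, 0 ≤ A i j) (hdiag : ∀ i, A i i = 0)
    (d : Fin n → ℝ) (hdeg : ∀ i, d i = ∑ j, A i j) (hdpos : ∀ i, 0 < d i)
    (S : Matrix (Fin n) (Fin n) ℝ)
    (hS : S = 1 - dhalfInv d * A * dhalfInv d)
    (lam2 : ℝ) (hlampos : 0 < lam2)
    (hlam : IsLeast {r : ℝ | ∃ x : Fin n → ℝ, x ≠ 0 ∧
        (fun i => Real.sqrt (d i)) ⬝ᵥ x = 0 ∧ r = (x ⬝ᵥ (S *ᵥ x)) / (x ⬝ᵥ x)} lam2)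
    (h : Fin n → ℝ) (hh : ∀ i, h i = ((d i)⁻¹ * ∑ j, (A i j) ^ 2 / d j)⁻¹)
    (σ2 : ℝ) (hσ : 0 ≤ σ2) (i j : Fin n) (hij : i ≠ j) :
    σ2 * (1 / d i + 1 / d j - 2 * A i j / (d i * d j)) ≤
      σ2 * (gstar d (Matrix.diagonal d - A) i i
        - 2 * gstar d (Matrix.diagonal d - A) i j
        + gstar d (Matrix.diagonal d - A) j j) ∧
    σ2 * (gstar d (Matrix.diagonal d - A) i i
        - 2 * gstar d (Matrix.diagonal d - A) i j
        + gstar d (Matrix.diagonal d - A) j j) ≤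
      σ2 * (1 / d i + 1 / d j - 2 * A i j / (d i * d j))
      + σ2 / lam2 * (1 / (d i * h i) + 1 / (d j * h j)
          - 2 * (∑ k, A i k * A j k / d k) / (d i * d j)) := by
  -- basic facts about d and sqrt d
  have hd0 : ∀ k, d k ≠ 0 := fun k => (hdpos k).ne'
  have hsq : ∀ k, Real.sqrt (d k) * Real.sqrt (d k) = d k :=
    fun k => Real.mul_self_sqrt (hdpos k).le
  have hsqpos : ∀ k, 0 < Real.sqrt (d k) := fun k => Real.sqrt_pos.mpr (hdpos k)
  have hsq0 : ∀ k, Real.sqrt (d k) ≠ 0 := fun k => (hsqpos k).ne'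
  set u : Fin n → ℝ := fun k => Real.sqrt (d k) with hu
  set Mm : Matrix (Fin n) (Fin n) ℝ := dhalfInv d * A * dhalfInv d with hMm
  have hA : ∀ a b, A a b = A b a := fun a b => congrFun (congrFun hsym b) a
  have hMent : ∀ a b, Mm a b = A a b / (Real.sqrt (d a) * Real.sqrt (d b)) := by
    intro a b
    rw [hMm, dhalfInv, Matrix.mul_diagonal, Matrix.diagonal_mul]
    ring
  have hMsym : Mmᵀ = Mm := by
    ext a b
    show Mm b a = Mm a b
    rw [hMent, hMent, hA b a, mul_comm (Real.sqrt (d b)) (Real.sqrt (d a))]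
  have hSsym : Sᵀ = S := by
    rw [hS, Matrix.transpose_sub, Matrix.transpose_one, hMsym]
  have hMS : Mm = 1 - S := by rw [hS, sub_sub_cancel]
  -- S annihilates u
  have hMu : Mm *ᵥ u = u := by
    funext k
    show ∑ b, Mm k b * u b = Real.sqrt (d k)
    have hterm : ∀ b, Mm k b * u b = A k b / Real.sqrt (d k) := by
      intro b
      rw [hMent]
      show A k b / (Real.sqrt (d k) * Real.sqrt (d b)) * Real.sqrt (d b) = _
      rw [div_mul_eq_mul_div, mul_comm (Real.sqrt (d k)) (Real.sqrt (d b)), ← div_div,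
        mul_div_assoc, div_self (hsq0 b), mul_one]
    rw [Finset.sum_congr rfl fun b _ => hterm b, ← Finset.sum_div, ← hdeg k]
    exact Real.div_sqrt
  have hSu : S *ᵥ u = 0 := by
    rw [hS, Matrix.sub_mulVec, Matrix.one_mulVec, hMu, sub_self]
  have huS : u ᵥ* S = 0 := by
    rw [← hSsym, Matrix.vecMul_transpose, hSu]
  have huM : u ᵥ* Mm = u := by
    rw [← hMsym, Matrix.vecMul_transpose, hMu]
  -- the pseudoinverse
  obtain ⟨hP1, hP2, hP3, hP4⟩ := mpinv_spec hSsym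
  set N : Matrix (Fin n) (Fin n) ℝ := mpinv S with hN
  have hNsym : Nᵀ = N := by
    have hT1 : S * Nᵀ * S = S := by
      have h0 := congrArg Matrix.transpose hP1
      rw [Matrix.transpose_mul, Matrix.transpose_mul, hSsym] at h0
      rw [Matrix.mul_assoc]
      exact h0
    have hT3' : S * Nᵀ = N * S := by
      calc S * Nᵀ = (N * Sᵀ)ᵀ := by rw [Matrix.transpose_mul, Matrix.transpose_transpose]
        _ = (N * S)ᵀ := by rw [hSsym]
        _ = N * S := hP4
    have hT4' : Nᵀ * S = S * N := by
      calc Nᵀ * S = (Sᵀ * N)ᵀ := by rw [Matrix.transpose_mul, Matrix.transpose_transpose]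
        _ = (S * N)ᵀ := by rw [hSsym]
        _ = S * N := hP3
    have hT2 : Nᵀ * S * Nᵀ = Nᵀ := by
      have h0 := congrArg Matrix.transpose hP2
      rw [Matrix.transpose_mul, Matrix.transpose_mul, hSsym] at h0
      rw [Matrix.mul_assoc]
      exact h0
    have hT3 : (S * Nᵀ)ᵀ = S * Nᵀ := by rw [hT3', hP4]
    have hT4 : (Nᵀ * S)ᵀ = Nᵀ * S := by rw [hT4', hP3]
    exact (penrose_unique hP1 hP2 hP3 hP4 hT1 hT2 hT3 hT4).symm
  have hSN_NS : S * N = N * S := by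
    rw [← hP3, Matrix.transpose_mul, hSsym, hNsym]
  -- u is orthogonal to everything in the range of N
  have huN : u ᵥ* N = 0 := by
    have h1 : u ᵥ* (S * N) = 0 := by
      rw [← Matrix.vecMul_vecMul, huS, Matrix.zero_vecMul]
    rw [hSN_NS] at h1
    calc u ᵥ* N = u ᵥ* (N * S * N) := by rw [hP2]
      _ = (u ᵥ* (N * S)) ᵥ* N := by rw [Matrix.vecMul_vecMul, Matrix.mul_assoc]
      _ = 0 := by rw [h1, Matrix.zero_vecMul]
  -- Rayleigh quotient bound
  have hdotnn : ∀ z : Fin n → ℝ, 0 ≤ z ⬝ᵥ z := by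
    intro z
    exact Finset.sum_nonneg fun k _ => mul_self_nonneg (z k)
  have hdotpos : ∀ z : Fin n → ℝ, z ≠ 0 → 0 < z ⬝ᵥ z := by
    intro z hz
    rcases eq_or_ne (z ⬝ᵥ z) 0 with h0 | h0
    · exact absurd (dotProduct_self_eq_zero.mp h0) hz
    · exact lt_of_le_of_ne (hdotnn z) (Ne.symm h0)
  have hray : ∀ z : Fin n → ℝ, u ⬝ᵥ z = 0 → lam2 * (z ⬝ᵥ z) ≤ z ⬝ᵥ (S *ᵥ z) := by
    intro z hz
    rcases eq_or_ne z 0 with rfl | hz0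
    · simp
    · have hmem := hlam.2 ⟨z, hz0, hz, rfl⟩
      rw [le_div_iff₀ (hdotpos z hz0)] at hmem
      linarith
  have huu : 0 < u ⬝ᵥ u := hdotpos u (fun h0 => hsq0 i (congrFun h0 i))
  have hpsd : ∀ x : Fin n → ℝ, 0 ≤ x ⬝ᵥ (S *ᵥ x) := by
    intro x
    set c : ℝ := (u ⬝ᵥ x) / (u ⬝ᵥ u) with hc
    set w : Fin n → ℝ := x - c • u with hw
    have hwu : u ⬝ᵥ w = 0 := by
      rw [hw, dotProduct_sub, dotProduct_smul, hc]
      rw [smul_eq_mul, div_mul_cancel₀ _ huu.ne', sub_self]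
    have hxw : S *ᵥ x = S *ᵥ w := by
      rw [hw, Matrix.mulVec_sub, Matrix.mulVec_smul, hSu, smul_zero, sub_zero]
    have hx : x = w + c • u := by rw [hw]; abel
    have hxq : x ⬝ᵥ (S *ᵥ x) = w ⬝ᵥ (S *ᵥ w) := by
      rw [hxw]
      conv_lhs => rw [hx]
      rw [add_dotProduct, smul_dotProduct, Matrix.dotProduct_mulVec u S w, huS,
        zero_dotProduct, smul_zero, add_zero]
    rw [hxq]
    calc (0:ℝ) ≤ lam2 * (w ⬝ᵥ w) := mul_nonneg hlampos.le (hdotnn w)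
      _ ≤ w ⬝ᵥ (S *ᵥ w) := hray w hwu
  -- kernel of S
  have hker : ∀ x : Fin n → ℝ, S *ᵥ x = 0 → u ⬝ᵥ x = 0 → x = 0 := by
    intro x hx0 hux
    by_contra hne
    have hmem := hlam.2 ⟨x, hne, hux, by rw [hx0, dotProduct_zero, zero_div]⟩
    linarith
  have hNS_id : ∀ x : Fin n → ℝ, u ⬝ᵥ x = 0 → N *ᵥ (S *ᵥ x) = x := by
    intro x hx
    have h1 : S *ᵥ (N *ᵥ (S *ᵥ x) - x) = 0 := by
      rw [Matrix.mulVec_sub, Matrix.mulVec_mulVec, Matrix.mulVec_mulVec, hP1, sub_self]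
    have h2 : u ⬝ᵥ (N *ᵥ (S *ᵥ x) - x) = 0 := by
      rw [dotProduct_sub, Matrix.dotProduct_mulVec, huN, zero_dotProduct, hx,
        sub_zero]
    exact sub_eq_zero.mp (hker _ h1 h2)
  have hSN_id : ∀ x : Fin n → ℝ, u ⬝ᵥ x = 0 → S *ᵥ (N *ᵥ x) = x := by
    intro x hx
    rw [Matrix.mulVec_mulVec, hSN_NS, ← Matrix.mulVec_mulVec, hNS_id x hx]
  -- the test vector
  set y : Fin n → ℝ :=
    Pi.single i (Real.sqrt (d i))⁻¹ - Pi.single j (Real.sqrt (d j))⁻¹ with hy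
  have huy : u ⬝ᵥ y = 0 := by
    rw [hy, dotProduct_sub, dotProduct_single, dotProduct_single]
    show Real.sqrt (d i) * (Real.sqrt (d i))⁻¹ - Real.sqrt (d j) * (Real.sqrt (d j))⁻¹ = 0
    rw [mul_inv_cancel₀ (hsq0 i), mul_inv_cancel₀ (hsq0 j), sub_self]
  set z : Fin n → ℝ := Mm *ᵥ y with hz
  have huz : u ⬝ᵥ z = 0 := by
    rw [hz, Matrix.dotProduct_mulVec, huM]
    exact huy
  -- scalar quantities
  have hinv : ∀ k : Fin n, (Real.sqrt (d k))⁻¹ * (Real.sqrt (d k))⁻¹ = 1 / d k := by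
    intro k
    rw [← mul_inv, hsq, one_div]
  have e1 : y ⬝ᵥ y = 1 / d i + 1 / d j := by
    rw [hy, sub_dotProduct, dotProduct_sub, dotProduct_sub,
      dotProduct_single, dotProduct_single, dotProduct_single,
      dotProduct_single]
    rw [Pi.single_eq_same, Pi.single_eq_same, Pi.single_eq_of_ne hij, Pi.single_eq_of_ne hij.symm]
    rw [hinv i, hinv j]
    ring
  have hzk : ∀ k, z k = (A i k / d i - A j k / d j) / Real.sqrt (d k) := by
    intro k
    have : z = Mm *ᵥ (Pi.single i (Real.sqrt (d i))⁻¹) - Mm *ᵥ (Pi.single j (Real.sqrt (d j))⁻¹) := by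
      rw [hz, hy, Matrix.mulVec_sub]
    rw [this]
    simp only [Pi.sub_apply, Matrix.mulVec_single, Pi.smul_apply, Matrix.col_apply, op_smul_eq_mul]
    rw [hMent, hMent, hA k i, hA k j]
    have h1 : Real.sqrt (d i) ≠ 0 := hsq0 i
    have h2 : Real.sqrt (d j) ≠ 0 := hsq0 j
    have h3 : Real.sqrt (d k) ≠ 0 := hsq0 k
    set si := Real.sqrt (d i)
    set sj := Real.sqrt (d j)
    set sk := Real.sqrt (d k)
    rw [show d i = si * si from (hsq i).symm, show d j = sj * sj from (hsq j).symm]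
    field_simp
  have e2 : y ⬝ᵥ z = -(2 * A i j / (d i * d j)) := by
    rw [hy, sub_dotProduct, single_dotProduct, single_dotProduct,
      hzk i, hzk j, hdiag i, hdiag j, hA j i]
    have h1 : Real.sqrt (d i) ≠ 0 := hsq0 i
    have h2 : Real.sqrt (d j) ≠ 0 := hsq0 j
    set si := Real.sqrt (d i)
    set sj := Real.sqrt (d j)
    rw [show d i = si * si from (hsq i).symm, show d j = sj * sj from (hsq j).symm]
    field_simp
    ring
  have hhi : ∀ a : Fin n, 1 / (d a * h a) = (∑ k, (A a k) ^ 2 / d k) / (d a) ^ 2 := by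
    intro a
    rw [hh a, mul_inv, inv_inv]
    rcases eq_or_ne (∑ k, (A a k) ^ 2 / d k) 0 with h0 | h0
    · rw [h0]
      simp
    · rw [show d a * (d a * (∑ k, (A a k) ^ 2 / d k)⁻¹) = (d a) ^ 2 / (∑ k, (A a k) ^ 2 / d k) from
        by rw [div_eq_mul_inv]; ring]
      rw [one_div_div]
  have e3' : z ⬝ᵥ z = (∑ k, (A i k) ^ 2 / d k) / (d i) ^ 2 + (∑ k, (A j k) ^ 2 / d k) / (d j) ^ 2
      - (∑ k, A i k * A j k / d k) * (2 / (d i * d j)) := by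
    have hterm : ∀ k, z k * z k = ((A i k) ^ 2 / d k) / (d i) ^ 2 + ((A j k) ^ 2 / d k) / (d j) ^ 2
        - (A i k * A j k / d k) * (2 / (d i * d j)) := by
      intro k
      rw [hzk k]
      have h1 := hd0 i
      have h2 := hd0 j
      have h3 : Real.sqrt (d k) ≠ 0 := hsq0 k
      set sk := Real.sqrt (d k)
      rw [show d k = sk * sk from (hsq k).symm]
      field_simp
      ring
    calc z ⬝ᵥ z = ∑ k, z k * z k := rfl
      _ = ∑ k, (((A i k) ^ 2 / d k) / (d i) ^ 2 + ((A j k) ^ 2 / d k) / (d j) ^ 2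
          - (A i k * A j k / d k) * (2 / (d i * d j))) :=
        Finset.sum_congr rfl fun k _ => hterm k
      _ = _ := by
        rw [Finset.sum_sub_distrib, Finset.sum_add_distrib, ← Finset.sum_div, ← Finset.sum_div,
          ← Finset.sum_mul]
  have e3 : z ⬝ᵥ z = 1 / (d i * h i) + 1 / (d j * h j)
      - 2 * (∑ k, A i k * A j k / d k) / (d i * d j) := by
    rw [e3', hhi i, hhi j]
    ring
  -- main identity
  have hzy : z = y - S *ᵥ y := by
    rw [hz, hMS, Matrix.sub_mulVec, Matrix.one_mulVec]
  have hidQ : y ⬝ᵥ (N *ᵥ y) = y ⬝ᵥ y + y ⬝ᵥ z + z ⬝ᵥ (N *ᵥ z) := by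
    have hNz : N *ᵥ z = N *ᵥ y - y := by
      rw [hzy, Matrix.mulVec_sub, hNS_id y huy]
    have hs1 : (S *ᵥ y) ⬝ᵥ (N *ᵥ y) = y ⬝ᵥ y := by
      rw [symm_dot hSsym, hSN_id y huy]
    have hs2 : (S *ᵥ y) ⬝ᵥ y = y ⬝ᵥ (S *ᵥ y) := symm_dot hSsym y y
    have h3 : y ⬝ᵥ z = y ⬝ᵥ y - y ⬝ᵥ (S *ᵥ y) := by
      rw [hzy, dotProduct_sub]
    have h4 : z ⬝ᵥ (N *ᵥ z) = y ⬝ᵥ (N *ᵥ y) - y ⬝ᵥ y - y ⬝ᵥ y + y ⬝ᵥ (S *ᵥ y) := by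
      rw [hNz]
      conv_lhs => rw [hzy]
      rw [sub_dotProduct, dotProduct_sub y (N *ᵥ y) y,
        dotProduct_sub (S *ᵥ y) (N *ᵥ y) y, hs1, hs2]
      ring
    linarith
  -- bounds on the remainder
  have hSNz : S *ᵥ (N *ᵥ z) = z := hSN_id z huz
  have hR0 : 0 ≤ z ⬝ᵥ (N *ᵥ z) := by
    calc (0:ℝ) ≤ (N *ᵥ z) ⬝ᵥ (S *ᵥ (N *ᵥ z)) := hpsd _
      _ = (N *ᵥ z) ⬝ᵥ z := by rw [hSNz]
      _ = z ⬝ᵥ (N *ᵥ z) := dotProduct_comm _ _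
  have hRC : lam2 * (z ⬝ᵥ (N *ᵥ z)) ≤ z ⬝ᵥ z := by
    have hvu : u ⬝ᵥ (N *ᵥ z) = 0 := by
      rw [Matrix.dotProduct_mulVec, huN, zero_dotProduct]
    have hr := hray (N *ᵥ z) hvu
    rw [hSNz] at hr
    have hr' : lam2 * ((N *ᵥ z) ⬝ᵥ (N *ᵥ z)) ≤ z ⬝ᵥ (N *ᵥ z) := by
      rw [dotProduct_comm (N *ᵥ z) z] at hr
      exact hr
    have hcs : (z ⬝ᵥ (N *ᵥ z)) ^ 2 ≤ (z ⬝ᵥ z) * ((N *ᵥ z) ⬝ᵥ (N *ᵥ z)) := by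
      have hc := Finset.sum_mul_sq_le_sq_mul_sq Finset.univ z (N *ᵥ z)
      have hd1 : z ⬝ᵥ z = ∑ k, z k ^ 2 := Finset.sum_congr rfl fun k _ => (pow_two (z k)).symm
      have hd2 : (N *ᵥ z) ⬝ᵥ (N *ᵥ z) = ∑ k, (N *ᵥ z) k ^ 2 :=
        Finset.sum_congr rfl fun k _ => (pow_two ((N *ᵥ z) k)).symm
      rw [hd1, hd2]
      exact hc
    exact aux_bound hlampos hr' hcs hR0 (hdotnn z)
  -- identification of the quadratic form
  have hSdef : dhalfInv d * (Matrix.diagonal d - A) * dhalfInv d = S := by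
    rw [hS, Matrix.mul_sub, Matrix.sub_mul]
    congr 1
    · rw [dhalfInv, Matrix.diagonal_mul_diagonal, Matrix.diagonal_mul_diagonal]
      have hfun : (fun k => 1 / Real.sqrt (d k) * d k * (1 / Real.sqrt (d k)))
          = fun _ : Fin n => (1:ℝ) := by
        funext k
        have h3 : Real.sqrt (d k) ≠ 0 := hsq0 k
        set sk := Real.sqrt (d k)
        rw [show d k = sk * sk from (hsq k).symm]
        field_simp
      rw [hfun]
      exact Matrix.diagonal_one
  have hgent : ∀ a b, gstar d (Matrix.diagonal d - A) a b
      = (Real.sqrt (d a))⁻¹ * N a b * (Real.sqrt (d b))⁻¹ := by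
    intro a b
    show (dhalfInv d * mpinv (dhalfInv d * (Matrix.diagonal d - A) * dhalfInv d) * dhalfInv d) a b = _
    rw [hSdef]
    rw [show mpinv S = N from rfl]
    rw [dhalfInv, Matrix.mul_diagonal, Matrix.diagonal_mul]
    rw [one_div, one_div]
  have hNij : N i j = N j i := congrFun (congrFun hNsym j) i
  have hgq : gstar d (Matrix.diagonal d - A) i i
        - 2 * gstar d (Matrix.diagonal d - A) i j
        + gstar d (Matrix.diagonal d - A) j j = y ⬝ᵥ (N *ᵥ y) := by
    have hNval : y ⬝ᵥ (N *ᵥ y) = (Real.sqrt (d i))⁻¹ * (N i i * (Real.sqrt (d i))⁻¹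
          - N i j * (Real.sqrt (d j))⁻¹)
        - (Real.sqrt (d j))⁻¹ * (N j i * (Real.sqrt (d i))⁻¹ - N j j * (Real.sqrt (d j))⁻¹) := by
      rw [hy, Matrix.mulVec_sub, sub_dotProduct, single_dotProduct,
        single_dotProduct]
      simp only [Pi.sub_apply, Matrix.mulVec_single, Pi.smul_apply, Matrix.col_apply, op_smul_eq_mul]
    rw [hNval, hgent, hgent, hgent, hNij]
    ring
  clear hgent
  -- conclusion
  rw [hgq, hidQ, e1, e2]
  constructor
  · nlinarith [mul_le_mul_of_nonneg_left hR0 hσ]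
  · have hC : z ⬝ᵥ (N *ᵥ z) ≤ (z ⬝ᵥ z) / lam2 := by
      rw [le_div_iff₀ hlampos]
      linarith [hRC]
    have h2 := mul_le_mul_of_nonneg_left hC hσ
    rw [← e3]
    have heq : σ2 * ((z ⬝ᵥ z) / lam2) = σ2 / lam2 * (z ⬝ᵥ z) := by ring
    nlinarith [h2, heq]

/-- variance bound for differences `α̂ᵢ - α̂ⱼ` (i ≠ j), where
`var(α̂ᵢ-α̂ⱼ) = σ²((L*)ᵢᵢ - 2(L*)ᵢⱼ + (L*)ⱼⱼ)` and `dᵢⱼ/hᵢⱼ = Σₖ AᵢₖAⱼₖ/dₖ`. -/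
theorem stmt13 {n : ℕ} (A : Matrix (Fin n) (Fin n) ℝ) (hsym : Aᵀ = A)
    (hnn : ∀ i j, 0 ≤ A i j) (hdiag : ∀ i, A i i = 0)
    (d : Fin n → ℝ) (hdeg : ∀ i, d i = ∑ j, A i j) (hdpos : ∀ i, 0 < d i)
    (hconn : Conn A)
    (S : Matrix (Fin n) (Fin n) ℝ)
    (hS : S = 1 - dhalfInv d * A * dhalfInv d)
    (lam2 : ℝ) (hlampos : 0 < lam2)
    (hlam : IsLeast {r : ℝ | ∃ x : Fin n → ℝ, x ≠ 0 ∧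
        (fun i => Real.sqrt (d i)) ⬝ᵥ x = 0 ∧ r = (x ⬝ᵥ (S *ᵥ x)) / (x ⬝ᵥ x)} lam2)
    (h : Fin n → ℝ) (hh : ∀ i, h i = ((d i)⁻¹ * ∑ j, (A i j) ^ 2 / d j)⁻¹)
    (σ2 : ℝ) (hσ : 0 ≤ σ2) (i j : Fin n) (hij : i ≠ j) :
    σ2 * (1 / d i + 1 / d j - 2 * A i j / (d i * d j)) ≤
      σ2 * (gstar d (Matrix.diagonal d - A) i i
        - 2 * gstar d (Matrix.diagonal d - A) i j
        + gstar d (Matrix.diagonal d - A) j j) ∧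
    σ2 * (gstar d (Matrix.diagonal d - A) i i
        - 2 * gstar d (Matrix.diagonal d - A) i j
        + gstar d (Matrix.diagonal d - A) j j) ≤
      σ2 * (1 / d i + 1 / d j - 2 * A i j / (d i * d j))
      + σ2 / lam2 * (1 / (d i * h i) + 1 / (d j * h j)
          - 2 * (∑ k, A i k * A j k / d k) / (d i * d j)) := by
  exact stmt13x A hsym hnn hdiag d hdeg hdpos S hS lam2 hlampos hlam h hh σ2 hσ i j hij
end
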